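/- arXiv:1612.06835 — 3 statements merged into one kernel-verified Lean document; each statement's English description precedes it below -/
import Mathlib

section
/- For every real y > 0, the complementary error function satisfies the two-sided bound (2/√π)·e^{−y²}/(y + √(y²+2)) < erfc(y) ≤ (2/√π)·e^{−y²}/(y + √(y²+4/π)). -/
open Real MeasureTheory Set Filter

noncomputable def Wf : ℝ → ℝ := fun x => ∫ t in Set.Ioi x, Real.exp (-t ^ 2)

lemma g_int : Integrable (fun t : ℝ => Real.exp (-t ^ 2)) := by
  have := integrable_exp_neg_mul_sq (b := 1) one_pos
  simpa using this

lemma g_cont : Continuous (fun t : ℝ => Real.exp (-t ^ 2)) := by continuity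

lemma W_zero : Wf 0 = Real.sqrt Real.pi / 2 := by
  have := integral_gaussian_Ioi 1
  simpa [Wf] using this

lemma W_eq (x : ℝ) (hx : 0 ≤ x) : Wf x = Wf 0 - ∫ t in (0:ℝ)..x, Real.exp (-t ^ 2) := by
  have h1 : (Ioc (0:ℝ) x) ∪ (Ioi x) = Ioi (0:ℝ) := Ioc_union_Ioi_eq_Ioi hx
  have h2 : ((∫ t in Ioc (0:ℝ) x, Real.exp (-t ^ 2)) + ∫ t in Ioi x, Real.exp (-t ^ 2))
      = ∫ t in Ioi (0:ℝ), Real.exp (-t ^ 2) := by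
    rw [← h1]
    exact (setIntegral_union (Ioc_disjoint_Ioi le_rfl) measurableSet_Ioi
      g_int.integrableOn g_int.integrableOn).symm
  rw [intervalIntegral.integral_of_le hx]
  simp only [Wf]
  linarith

lemma hasDerivAt_W {x : ℝ} (hx : 0 < x) : HasDerivAt Wf (-Real.exp (-x ^ 2)) x := by
  have hftc : HasDerivAt (fun u : ℝ => Wf 0 - ∫ t in (0:ℝ)..u, Real.exp (-t ^ 2))
      (-Real.exp (-x ^ 2)) x := by
    have h := (intervalIntegral.integral_hasDerivAt_right (g_int.intervalIntegrable)
      (g_cont.aestronglyMeasurable.stronglyMeasurableAtFilter) g_cont.continuousAt :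
      HasDerivAt (fun u => ∫ t in (0:ℝ)..u, Real.exp (-t ^ 2)) _ x)
    simpa using (h.const_sub (Wf 0))
  apply hftc.congr_of_eventuallyEq
  filter_upwards [eventually_gt_nhds hx] with u hu using W_eq u hu.le

lemma W_cont : ContinuousOn Wf (Ici 0) := by
  have : ContinuousOn (fun u : ℝ => Wf 0 - ∫ t in (0:ℝ)..u, Real.exp (-t ^ 2)) (Ici 0) :=
    (continuous_const.sub (intervalIntegral.continuous_primitive
      (fun a b => g_int.intervalIntegrable) 0)).continuousOn
  exact this.congr fun u hu => W_eq u hu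

lemma W_tendsto : Tendsto Wf atTop (nhds 0) := by
  have h := intervalIntegral_tendsto_integral_Ioi 0 (g_int.integrableOn) tendsto_id
  have h2 : Tendsto (fun x : ℝ => Wf 0 - ∫ t in (0:ℝ)..x, Real.exp (-t ^ 2)) atTop (nhds 0) := by
    have := (tendsto_const_nhds (x := Wf 0) (f := atTop)).sub h
    simpa [Wf] using this
  apply h2.congr'
  filter_upwards [eventually_ge_atTop (0:ℝ)] with u hu using (W_eq u hu).symm

lemma bracket_rw {c y : ℝ} (hc : 0 < c) :
    c - 1 + 2*y^2 - 2*y*Real.sqrt (y^2+c) + y/Real.sqrt (y^2+c)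
    = ((c-1+2*y^2)*Real.sqrt (y^2+c) - (2*y^3+(2*c-1)*y) )/Real.sqrt (y^2+c) := by
  have hpos : 0 < y^2 + c := by positivity
  have hs0 : 0 < Real.sqrt (y^2+c) := Real.sqrt_pos.mpr hpos
  have hs : Real.sqrt (y^2+c) ^ 2 = y^2 + c := Real.sq_sqrt hpos.le
  field_simp
  linear_combination (-2*y) * hs

lemma num_pos {y : ℝ} (hy : 0 < y) :
    0 < (2-1+2*y^2)*Real.sqrt (y^2+2) - (2*y^3+(2*2-1)*y) := by
  have hpos : 0 < y^2 + 2 := by positivity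
  have hs0 : 0 < Real.sqrt (y^2+2) := Real.sqrt_pos.mpr hpos
  have hs : Real.sqrt (y^2+2) ^ 2 = y^2 + 2 := Real.sq_sqrt hpos.le
  have hB : (0:ℝ) ≤ 2*y^3+3*y := by positivity
  have hsq : (2*y^3+3*y)^2 < ((1+2*y^2)*Real.sqrt (y^2+2))^2 := by
    have : ((1+2*y^2)*Real.sqrt (y^2+2))^2 = (1+2*y^2)^2*(y^2+2) := by
      rw [mul_pow, hs]
    rw [this]; nlinarith [sq_nonneg y]
  have := lt_of_pow_lt_pow_left₀ 2 (by positivity) hsq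
  nlinarith [this]

lemma num_nonneg {c y : ℝ} (hc1 : 1 < c) (hy : 0 ≤ y)
    (h : (2-c)*y^2 ≤ (c-1)^2) :
    0 ≤ (c-1+2*y^2)*Real.sqrt (y^2+c) - (2*y^3+(2*c-1)*y) := by
  have hc : 0 < c := by linarith
  have hpos : 0 < y^2 + c := by positivity
  have hs0 : 0 < Real.sqrt (y^2+c) := Real.sqrt_pos.mpr hpos
  have hs : Real.sqrt (y^2+c) ^ 2 = y^2 + c := Real.sq_sqrt hpos.le
  have hA : (0:ℝ) < c-1+2*y^2 := by nlinarith
  have hsq : (2*y^3+(2*c-1)*y)^2 ≤ ((c-1+2*y^2)*Real.sqrt (y^2+c))^2 := by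
    have : ((c-1+2*y^2)*Real.sqrt (y^2+c))^2 = (c-1+2*y^2)^2*(y^2+c) := by
      rw [mul_pow, hs]
    rw [this]; nlinarith [sq_nonneg y, mul_nonneg (mul_nonneg hy hy) hy]
  have := le_of_pow_le_pow_left₀ two_ne_zero
    (by positivity : (0:ℝ) ≤ (c-1+2*y^2)*Real.sqrt (y^2+c)) hsq
  linarith

lemma num_nonpos {c y : ℝ} (hc1 : 1 < c) (hy : 0 ≤ y)
    (h : (c-1)^2 ≤ (2-c)*y^2) :
    (c-1+2*y^2)*Real.sqrt (y^2+c) - (2*y^3+(2*c-1)*y) ≤ 0 := by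
  have hc : 0 < c := by linarith
  have hpos : 0 < y^2 + c := by positivity
  have hs0 : 0 < Real.sqrt (y^2+c) := Real.sqrt_pos.mpr hpos
  have hs : Real.sqrt (y^2+c) ^ 2 = y^2 + c := Real.sq_sqrt hpos.le
  have hB : (0:ℝ) ≤ 2*y^3+(2*c-1)*y := by nlinarith [pow_nonneg hy 3]
  have hsq : ((c-1+2*y^2)*Real.sqrt (y^2+c))^2 ≤ (2*y^3+(2*c-1)*y)^2 := by
    have : ((c-1+2*y^2)*Real.sqrt (y^2+c))^2 = (c-1+2*y^2)^2*(y^2+c) := by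
      rw [mul_pow, hs]
    rw [this]; nlinarith [sq_nonneg y]
  have := le_of_pow_le_pow_left₀ two_ne_zero hB hsq
  linarith

noncomputable def Bc (c : ℝ) : ℝ → ℝ := fun y => Real.exp (-y^2) * (Real.sqrt (y^2+c) - y) / c

lemma hasDerivAt_B {c : ℝ} (hc : 0 < c) (y : ℝ) :
    HasDerivAt (Bc c)
      (Real.exp (-y^2)/c * (-1 + 2*y^2 - 2*y*Real.sqrt (y^2+c) + y/Real.sqrt (y^2+c))) y := by
  have hpos : 0 < y^2 + c := by positivity
  have hs0 : 0 < Real.sqrt (y^2+c) := Real.sqrt_pos.mpr hpos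
  have h1 : HasDerivAt (fun y : ℝ => y^2+c) (2*y) y := by
    simpa using ((hasDerivAt_pow 2 y).add_const c)
  have hsqrt : HasDerivAt (fun y : ℝ => Real.sqrt (y^2+c)) (2*y / (2*Real.sqrt (y^2+c))) y :=
    h1.sqrt (ne_of_gt hpos)
  have hsub : HasDerivAt (fun y : ℝ => Real.sqrt (y^2+c) - y) (2*y / (2*Real.sqrt (y^2+c)) - 1) y :=
    hsqrt.sub (hasDerivAt_id y)
  have hexp : HasDerivAt (fun y : ℝ => Real.exp (-y^2)) (-(2*y) * Real.exp (-y^2)) y := by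
    have h2 : HasDerivAt (fun y : ℝ => -y^2) (-(2*y)) y := by
      simpa using (hasDerivAt_pow 2 y).fun_neg
    simpa [mul_comm] using h2.exp
  have hmul := (hexp.fun_mul hsub).div_const c
  refine hmul.congr_deriv ?_
  field_simp
  ring

lemma B_cont {c : ℝ} : Continuous (Bc c) := by
  unfold Bc
  fun_prop

lemma B_tendsto {c : ℝ} (hc : 0 < c) : Tendsto (Bc c) atTop (nhds 0) := by
  have hexp : Tendsto (fun x : ℝ => Real.exp (-x^2)) atTop (nhds 0) :=
    tendsto_exp_neg_atTop_nhds_zero.comp (tendsto_pow_atTop two_ne_zero)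
  have hbound : ∀ᶠ x in atTop, |Bc c x| ≤ Real.exp (-x^2) * Real.sqrt c / c := by
    filter_upwards [eventually_ge_atTop (0:ℝ)] with x hx
    have hs0 : (0:ℝ) ≤ Real.sqrt (x^2+c) := Real.sqrt_nonneg _
    have h1 : x ≤ Real.sqrt (x^2+c) := by
      have := Real.sqrt_le_sqrt (show x^2 ≤ x^2 + c by linarith)
      rwa [Real.sqrt_sq hx] at this
    have h2 : Real.sqrt (x^2+c) ≤ x + Real.sqrt c := by
      rw [show x + Real.sqrt c = Real.sqrt ((x + Real.sqrt c)^2) by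
        rw [Real.sqrt_sq (by positivity)]]
      apply Real.sqrt_le_sqrt
      nlinarith [Real.sq_sqrt hc.le, Real.sqrt_nonneg c, mul_nonneg hx (Real.sqrt_nonneg c)]
    have hnn : 0 ≤ Bc c x := by
      unfold Bc
      have he := (Real.exp_pos (-x^2)).le
      apply div_nonneg _ hc.le
      exact mul_nonneg he (by linarith)
    rw [abs_of_nonneg hnn]
    unfold Bc
    gcongr Real.exp (-x^2) * ?_ / c
    linarith
  have hb0 : Tendsto (fun x : ℝ => Real.exp (-x^2) * Real.sqrt c / c) atTop (nhds 0) := by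
    have := (hexp.mul_const (Real.sqrt c)).div_const c
    simpa using this
  have habs : Tendsto (fun x => |Bc c x|) atTop (nhds 0) :=
    squeeze_zero' (by filter_upwards with x using abs_nonneg _) hbound hb0
  exact (tendsto_zero_iff_abs_tendsto_zero _).mpr habs

lemma lower_key {y : ℝ} (hy : 0 < y) : Bc 2 y < Wf y := by
  set F : ℝ → ℝ := fun x => Wf x - Bc 2 x with hF
  have hderiv : ∀ x : ℝ, 0 < x → HasDerivAt F
      (-(Real.exp (-x^2)/2 *
        ((2:ℝ) - 1 + 2*x^2 - 2*x*Real.sqrt (x^2+2) + x/Real.sqrt (x^2+2)))) x := by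
    intro x hx
    have h := (hasDerivAt_W hx).fun_sub (hasDerivAt_B two_pos x)
    refine h.congr_deriv ?_
    ring
  have hcont : ContinuousOn F (Ici 0) := W_cont.sub B_cont.continuousOn
  have hanti : StrictAntiOn F (Ici 0) := by
    apply strictAntiOn_of_deriv_neg (convex_Ici 0) hcont
    intro x hx
    rw [interior_Ici] at hx
    rw [(hderiv x hx).deriv]
    have hb := num_pos hx
    have hs0 : 0 < Real.sqrt (x^2+2) := Real.sqrt_pos.mpr (by positivity)
    have : 0 < (2:ℝ) - 1 + 2*x^2 - 2*x*Real.sqrt (x^2+2) + x/Real.sqrt (x^2+2) := by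
      rw [bracket_rw two_pos]
      exact div_pos hb hs0
    have he := Real.exp_pos (-x^2)
    nlinarith
  have hFt : Tendsto F atTop (nhds 0) := by
    simpa using W_tendsto.sub (B_tendsto two_pos)
  have h1 : 0 ≤ F (y+1) := by
    apply le_of_tendsto hFt
    filter_upwards [eventually_ge_atTop (y+1)] with z hz
    rcases eq_or_lt_of_le hz with h | h
    · exact le_of_eq (congrArg F h.symm)
    · exact (hanti (by simp; linarith) (by simp; linarith) h).le
  have h2 : F (y+1) < F y := hanti hy.le (by simp; linarith) (lt_add_one y)
  have : 0 < F y := lt_of_le_of_lt h1 h2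
  simp only [hF] at this
  linarith

lemma upper_key {y : ℝ} (hy : 0 < y) : Wf y ≤ Bc (4/Real.pi) y := by
  set c : ℝ := 4/Real.pi with hcdef
  have hpi := Real.pi_pos
  have hc0 : 0 < c := by rw [hcdef]; positivity
  have hc1 : 1 < c := by
    rw [hcdef, lt_div_iff₀ hpi]
    nlinarith [Real.pi_lt_d2]
  have hc2 : c < 2 := by
    rw [hcdef, div_lt_iff₀ hpi]
    nlinarith [Real.pi_gt_three]
  set t0 : ℝ := Real.sqrt ((c-1)^2/(2-c)) with ht0def
  have hfrac : 0 < (c-1)^2/(2-c) := div_pos (by nlinarith) (by linarith)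
  have ht0 : 0 < t0 := Real.sqrt_pos.mpr hfrac
  have ht0sq : t0^2 = (c-1)^2/(2-c) := Real.sq_sqrt hfrac.le
  set G : ℝ → ℝ := fun x => Bc c x - Wf x with hG
  have hderiv : ∀ x : ℝ, 0 < x → HasDerivAt G
      (Real.exp (-x^2)/c *
        (c - 1 + 2*x^2 - 2*x*Real.sqrt (x^2+c) + x/Real.sqrt (x^2+c))) x := by
    intro x hx
    have h := (hasDerivAt_B hc0 x).fun_sub (hasDerivAt_W hx)
    refine h.congr_deriv ?_
    field_simp
    ring
  have hGt : Tendsto G atTop (nhds 0) := by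
    simpa using (B_tendsto hc0).sub W_tendsto
  have hG0 : G 0 = 0 := by
    have hu : Real.sqrt Real.pi ^ 2 = Real.pi := Real.sq_sqrt hpi.le
    have hu0 : 0 < Real.sqrt Real.pi := Real.sqrt_pos.mpr hpi
    have h4 : Real.sqrt c = 2 / Real.sqrt Real.pi := by
      rw [hcdef, show (4:ℝ) = 2^2 by norm_num, Real.sqrt_div (by positivity), Real.sqrt_sq two_pos.le]
    have hkey : Real.sqrt c / c = Real.sqrt Real.pi / 2 := by
      rw [h4, hcdef]
      field_simp
      linear_combination (-4) * hu
    simp only [hG, Bc]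
    rw [W_zero]
    norm_num
    rw [hkey]
    ring
  have hmono : MonotoneOn G (Icc 0 t0) := by
    apply monotoneOn_of_deriv_nonneg (convex_Icc 0 t0)
      (B_cont.continuousOn.sub (W_cont.mono Icc_subset_Ici_self))
    · intro x hx
      rw [interior_Icc] at hx
      exact (hderiv x hx.1).differentiableAt.differentiableWithinAt
    · intro x hx
      rw [interior_Icc] at hx
      rw [show Bc c - Wf = G from rfl, (hderiv x hx.1).deriv]
      have hcond : (2-c)*x^2 ≤ (c-1)^2 := by
        have hx2 : x^2 ≤ t0^2 := by nlinarith [hx.1.le, hx.2.le]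
        rw [ht0sq] at hx2
        rw [le_div_iff₀ (by linarith : (0:ℝ) < 2-c)] at hx2
        nlinarith [hx2]
      have hb := num_nonneg hc1 hx.1.le hcond
      have hs0 : 0 < Real.sqrt (x^2+c) := Real.sqrt_pos.mpr (by positivity)
      have : 0 ≤ c - 1 + 2*x^2 - 2*x*Real.sqrt (x^2+c) + x/Real.sqrt (x^2+c) := by
        rw [bracket_rw hc0]
        exact div_nonneg hb hs0.le
      have he := (Real.exp_pos (-x^2)).le
      positivity
  have hanti : AntitoneOn G (Ici t0) := by
    apply antitoneOn_of_deriv_nonpos (convex_Ici t0)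
      (B_cont.continuousOn.sub (W_cont.mono (Ici_subset_Ici.mpr ht0.le)))
    · intro x hx
      rw [interior_Ici] at hx
      exact (hderiv x (ht0.trans hx)).differentiableAt.differentiableWithinAt
    · intro x hx
      rw [interior_Ici] at hx
      have hx0 : 0 < x := ht0.trans hx
      rw [show Bc c - Wf = G from rfl, (hderiv x hx0).deriv]
      have hcond : (c-1)^2 ≤ (2-c)*x^2 := by
        have hx2 : t0^2 ≤ x^2 := by nlinarith [ht0.le, (Set.mem_Ioi.mp hx).le]
        rw [ht0sq] at hx2
        rw [div_le_iff₀ (by linarith : (0:ℝ) < 2-c)] at hx2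
        linarith
      have hb := num_nonpos hc1 hx0.le hcond
      have hs0 : 0 < Real.sqrt (x^2+c) := Real.sqrt_pos.mpr (by positivity)
      have hbr : c - 1 + 2*x^2 - 2*x*Real.sqrt (x^2+c) + x/Real.sqrt (x^2+c) ≤ 0 := by
        rw [bracket_rw hc0]
        exact div_nonpos_of_nonpos_of_nonneg hb hs0.le
      have he := (Real.exp_pos (-x^2)).le
      have hec : 0 ≤ Real.exp (-x^2)/c := by positivity
      exact mul_nonpos_of_nonneg_of_nonpos hec hbr
  have hGy : 0 ≤ G y := by
    rcases le_or_gt y t0 with h | h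
    · have := hmono (Set.mem_Icc.mpr ⟨le_rfl, ht0.le⟩) (Set.mem_Icc.mpr ⟨hy.le, h⟩) hy.le
      rwa [hG0] at this
    · apply le_of_tendsto hGt
      filter_upwards [eventually_ge_atTop y] with z hz
      exact hanti (Set.mem_Ici.mpr h.le) (Set.mem_Ici.mpr (h.le.trans hz)) hz
  simp only [hG] at hGy
  linarith

/-- erfc(x) = (2/√π)·∫_x^∞ e^{−t²} dt -/
noncomputable def erfc (x : ℝ) : ℝ := (2 / Real.sqrt Real.pi) * ∫ t in Set.Ioi x, Real.exp (-t ^ 2)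

theorem stmt1 (y : ℝ) (hy : 0 < y) :
    (2 / Real.sqrt Real.pi) * Real.exp (-y ^ 2) / (y + Real.sqrt (y ^ 2 + 2)) < erfc y ∧
    erfc y ≤ (2 / Real.sqrt Real.pi) * Real.exp (-y ^ 2) / (y + Real.sqrt (y ^ 2 + 4 / Real.pi)) := by
  have hpi := Real.pi_pos
  have hu0 : 0 < Real.sqrt Real.pi := Real.sqrt_pos.mpr hpi
  have hfac : 0 < 2 / Real.sqrt Real.pi := by positivity
  have herfc : erfc y = (2 / Real.sqrt Real.pi) * Wf y := rfl
  constructor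
  · have hpos : 0 < y^2 + 2 := by positivity
    have hs0 : 0 < Real.sqrt (y^2+2) := Real.sqrt_pos.mpr hpos
    have hs : Real.sqrt (y^2+2) ^ 2 = y^2 + 2 := Real.sq_sqrt hpos.le
    have hden : 0 < y + Real.sqrt (y^2+2) := by linarith
    have hq : Real.exp (-y^2) / (y + Real.sqrt (y^2+2))
        = Real.exp (-y^2) * (Real.sqrt (y^2+2) - y) / 2 := by
      rw [div_eq_div_iff hden.ne' two_ne_zero]
      linear_combination (-Real.exp (-y^2)) * hs
    rw [herfc, mul_div_assoc, hq]
    exact mul_lt_mul_of_pos_left (lower_key hy) hfac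
  · have hc0 : (0:ℝ) < 4 / Real.pi := by positivity
    have hpos : 0 < y^2 + 4 / Real.pi := by positivity
    have hs0 : 0 < Real.sqrt (y^2 + 4 / Real.pi) := Real.sqrt_pos.mpr hpos
    have hs : Real.sqrt (y^2 + 4 / Real.pi) ^ 2 = y^2 + 4 / Real.pi := Real.sq_sqrt hpos.le
    have hden : 0 < y + Real.sqrt (y^2 + 4 / Real.pi) := by linarith
    have hq : Real.exp (-y^2) / (y + Real.sqrt (y^2 + 4 / Real.pi))
        = Real.exp (-y^2) * (Real.sqrt (y^2 + 4 / Real.pi) - y) / (4 / Real.pi) := by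
      rw [div_eq_div_iff hden.ne' hc0.ne']
      linear_combination (-Real.exp (-y^2)) * hs
    rw [herfc, mul_div_assoc, hq]
    exact mul_le_mul_of_nonneg_left (upper_key hy) hfac.le
end

section
/- Let 0 < β < α < 1. The function φ(γ) = −(1−β)·H((1−α−γ)/(1−β)) − β·H((β−γ)/β), where H(x) = x·log x + (1−x)·log(1−x), is strictly concave on the open interval γ ∈ (max(0, β−α), min(1−α, β)); in particular its second derivative equals −(1−β)/((1−α−γ)(α−β+γ)) − β/(γ(β−γ)), which is negative whenever 1−α−γ > 0, α−β+γ > 0, γ > 0, and β−γ > 0. -/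
open Real

/-- H(x) = x·log x + (1−x)·log(1−x) -/
noncomputable def H (x : ℝ) : ℝ := x * Real.log x + (1 - x) * Real.log (1 - x)

lemma hasDerivAt_H {x : ℝ} (h0 : 0 < x) (h1 : x < 1) :
    HasDerivAt H (Real.log x - Real.log (1 - x)) x := by
  have h1' : 0 < 1 - x := by linarith
  have d1 : HasDerivAt (fun x : ℝ => x * Real.log x) (Real.log x + 1) x := by
    have := (hasDerivAt_id x).mul (Real.hasDerivAt_log h0.ne')
    refine this.congr_deriv ?_
    field_simp
    simp only [id_eq]; ring
  have d2 : HasDerivAt (fun x : ℝ => (1 - x) * Real.log (1 - x))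
      (-Real.log (1 - x) - 1) x := by
    have dl : HasDerivAt (fun x : ℝ => Real.log (1 - x)) (-(1 - x)⁻¹) x := by
      have := (Real.hasDerivAt_log h1'.ne').comp x
        ((hasDerivAt_const x (1:ℝ)).sub (hasDerivAt_id x))
      refine this.congr_deriv ?_
      simp
    have := ((hasDerivAt_const x (1:ℝ)).sub (hasDerivAt_id x)).mul dl
    refine this.congr_deriv ?_
    simp only [Pi.sub_apply, id_eq]
    field_simp
    ring
  have := d1.add d2
  refine this.congr_deriv ?_
  ring

lemma hasDerivAt_phi (α β : ℝ) (hβ : 0 < β) (hβα : β < α) (hα : α < 1)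
    {γ : ℝ} (h1 : 0 < 1 - α - γ) (h2 : 0 < α - β + γ) (h3 : 0 < γ) (h4 : 0 < β - γ) :
    HasDerivAt (fun γ : ℝ => -(1 - β) * H ((1 - α - γ) / (1 - β)) - β * H ((β - γ) / β))
      (Real.log (1 - α - γ) - Real.log (α - β + γ) + Real.log (β - γ) - Real.log γ) γ := by
  have hb : 0 < 1 - β := by linarith
  have hu0 : 0 < (1 - α - γ) / (1 - β) := div_pos h1 hb
  have hu1 : (1 - α - γ) / (1 - β) < 1 := by
    rw [div_lt_one hb]; linarith
  have hv0 : 0 < (β - γ) / β := div_pos h4 hβ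
  have hv1 : (β - γ) / β < 1 := by
    rw [div_lt_one hβ]; linarith
  have du : HasDerivAt (fun γ : ℝ => (1 - α - γ) / (1 - β)) (-(1 - β)⁻¹) γ := by
    have := ((hasDerivAt_const γ (1 - α)).sub (hasDerivAt_id γ)).div_const (1 - β)
    refine this.congr_deriv ?_; ring
  have dv : HasDerivAt (fun γ : ℝ => (β - γ) / β) (-β⁻¹) γ := by
    have := ((hasDerivAt_const γ β).sub (hasDerivAt_id γ)).div_const β
    refine this.congr_deriv ?_; ring
  have dH1 := ((hasDerivAt_H hu0 hu1).comp γ du).const_mul (-(1 - β))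
  have dH2 := ((hasDerivAt_H hv0 hv1).comp γ dv).const_mul β
  have := dH1.sub dH2
  refine this.congr_deriv ?_
  have e1 : 1 - (1 - α - γ) / (1 - β) = (α - β + γ) / (1 - β) := by
    field_simp; ring
  have e2 : 1 - (β - γ) / β = γ / β := by
    field_simp
    ring
  rw [e1, e2, Real.log_div h1.ne' hb.ne', Real.log_div h2.ne' hb.ne',
    Real.log_div h4.ne' hβ.ne', Real.log_div h3.ne' hβ.ne']
  field_simp
  ring

lemma hasDerivAt_g (α β : ℝ) {γ : ℝ} (h1 : 0 < 1 - α - γ) (h2 : 0 < α - β + γ)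
    (h3 : 0 < γ) (h4 : 0 < β - γ) :
    HasDerivAt (fun γ : ℝ => Real.log (1 - α - γ) - Real.log (α - β + γ)
      + Real.log (β - γ) - Real.log γ)
      (-(1 - α - γ)⁻¹ - (α - β + γ)⁻¹ - (β - γ)⁻¹ - γ⁻¹) γ := by
  have d1 : HasDerivAt (fun γ : ℝ => Real.log (1 - α - γ)) (-(1 - α - γ)⁻¹) γ := by
    have := (Real.hasDerivAt_log h1.ne').comp γ
      ((hasDerivAt_const γ (1 - α)).sub (hasDerivAt_id γ))
    refine this.congr_deriv ?_; ring
  have d2 : HasDerivAt (fun γ : ℝ => Real.log (α - β + γ)) ((α - β + γ)⁻¹) γ := by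
    have := (Real.hasDerivAt_log h2.ne').comp γ
      ((hasDerivAt_const γ (α - β)).add (hasDerivAt_id γ))
    refine this.congr_deriv ?_; ring
  have d3 : HasDerivAt (fun γ : ℝ => Real.log (β - γ)) (-(β - γ)⁻¹) γ := by
    have := (Real.hasDerivAt_log h4.ne').comp γ
      ((hasDerivAt_const γ β).sub (hasDerivAt_id γ))
    refine this.congr_deriv ?_; ring
  have d4 : HasDerivAt (fun γ : ℝ => Real.log γ) (γ⁻¹) γ := Real.hasDerivAt_log h3.ne'
  exact ((d1.sub d2).add d3).sub d4

theorem stmt6 (α β : ℝ) (hβ : 0 < β) (hβα : β < α) (hα : α < 1) :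
    StrictConcaveOn ℝ (Set.Ioo (max 0 (β - α)) (min (1 - α) β))
      (fun γ : ℝ => -(1 - β) * H ((1 - α - γ) / (1 - β)) - β * H ((β - γ) / β)) ∧
    ∀ γ : ℝ, 0 < 1 - α - γ → 0 < α - β + γ → 0 < γ → 0 < β - γ →
      (deriv (deriv (fun γ : ℝ => -(1 - β) * H ((1 - α - γ) / (1 - β)) - β * H ((β - γ) / β))) γ
        = -(1 - β) / ((1 - α - γ) * (α - β + γ)) - β / (γ * (β - γ)) ∧
      -(1 - β) / ((1 - α - γ) * (α - β + γ)) - β / (γ * (β - γ)) < 0) := by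
  set φ := fun γ : ℝ => -(1 - β) * H ((1 - α - γ) / (1 - β)) - β * H ((β - γ) / β) with hφ
  set S := Set.Ioo (max 0 (β - α)) (min (1 - α) β) with hS
  have hmem : ∀ x : ℝ, x ∈ S ↔ (0 < 1 - α - x ∧ 0 < α - β + x ∧ 0 < x ∧ 0 < β - x) := by
    intro x
    simp only [hS, Set.mem_Ioo, max_lt_iff, lt_min_iff]
    constructor
    · rintro ⟨⟨a, b⟩, c, d⟩; exact ⟨by linarith, by linarith, a, by linarith⟩
    · rintro ⟨a, b, c, d⟩; exact ⟨⟨c, by linarith⟩, by linarith, by linarith⟩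
  -- deriv φ = g on S
  have hderiv : ∀ x ∈ S, deriv φ x =
      Real.log (1 - α - x) - Real.log (α - β + x) + Real.log (β - x) - Real.log x := by
    intro x hx
    obtain ⟨a, b, c, d⟩ := (hmem x).1 hx
    exact (hasDerivAt_phi α β hβ hβα hα a b c d).deriv
  have hderiv2 : ∀ x : ℝ, 0 < 1 - α - x → 0 < α - β + x → 0 < x → 0 < β - x →
      deriv (deriv φ) x = -(1 - β) / ((1 - α - x) * (α - β + x)) - β / (x * (β - x)) := by
    intro x a b c d
    have hxS : x ∈ S := (hmem x).2 ⟨a, b, c, d⟩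
    have heq : deriv φ =ᶠ[nhds x] (fun γ : ℝ => Real.log (1 - α - γ) - Real.log (α - β + γ)
        + Real.log (β - γ) - Real.log γ) :=
      Filter.eventuallyEq_of_mem (isOpen_Ioo.mem_nhds hxS) hderiv
    rw [heq.deriv_eq, (hasDerivAt_g α β a b c d).deriv]
    field_simp
    ring
  have hneg : ∀ x : ℝ, 0 < 1 - α - x → 0 < α - β + x → 0 < x → 0 < β - x →
      -(1 - β) / ((1 - α - x) * (α - β + x)) - β / (x * (β - x)) < 0 := by
    intro x a b c d
    have hb : 0 < 1 - β := by linarith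
    have t1 : 0 < (1 - β) / ((1 - α - x) * (α - β + x)) := div_pos hb (mul_pos a b)
    have t2 : 0 < β / (x * (β - x)) := div_pos hβ (mul_pos c d)
    have : -(1 - β) / ((1 - α - x) * (α - β + x)) = -((1 - β) / ((1 - α - x) * (α - β + x))) := by
      ring
    rw [this]
    linarith
  constructor
  · apply strictConcaveOn_of_deriv2_neg (convex_Ioo _ _)
    · intro x hx
      obtain ⟨a, b, c, d⟩ := (hmem x).1 hx
      exact (hasDerivAt_phi α β hβ hβα hα a b c d).continuousAt.continuousWithinAt
    · intro x hx
      rw [interior_Ioo] at hx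
      obtain ⟨a, b, c, d⟩ := (hmem x).1 hx
      have := hderiv2 x a b c d
      have hlt := hneg x a b c d
      simp only [Function.iterate_succ, Function.iterate_zero, Function.comp_apply, id_eq]
      rw [this]
      exact hlt
  · intro γ a b c d
    exact ⟨hderiv2 γ a b c d, hneg γ a b c d⟩
end

section
/- Let α > 0, A₀ > 0, set c₃ = (1−A₀²)·√α/A₀ and γ̂ = (c₃ − √(c₃²+4α))/4. Then γ̂·c₃ − (α/2)·log(1 − c₃/(2γ̂)) = −(1−A₀²)·α/2 + α·log(A₀), provided 1 − c₃/(2γ̂) > 0. -/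
open Real

theorem stmt13 (α A₀ : ℝ) (hα : 0 < α) (hA : 0 < A₀)
    (c₃ : ℝ) (hc : c₃ = (1 - A₀ ^ 2) * Real.sqrt α / A₀)
    (γ : ℝ) (hγ : γ = (c₃ - Real.sqrt (c₃ ^ 2 + 4 * α)) / 4)
    (hpos : 0 < 1 - c₃ / (2 * γ)) :
    γ * c₃ - (α / 2) * Real.log (1 - c₃ / (2 * γ))
      = -(1 - A₀ ^ 2) * α / 2 + α * Real.log A₀ := by
  have hs : 0 < Real.sqrt α := Real.sqrt_pos.mpr hα
  have hsq : Real.sqrt α ^ 2 = α := Real.sq_sqrt hα.le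
  have hA0 : A₀ ≠ 0 := hA.ne'
  have hroot : Real.sqrt (c₃ ^ 2 + 4 * α) = Real.sqrt α * (1 + A₀ ^ 2) / A₀ := by
    rw [show c₃ ^ 2 + 4 * α = (Real.sqrt α * (1 + A₀ ^ 2) / A₀) ^ 2 by
      rw [hc]; field_simp; nlinarith [hsq]]
    exact Real.sqrt_sq (by positivity)
  have hγ' : γ = -(Real.sqrt α * A₀) / 2 := by
    rw [hγ, hroot, hc]; field_simp; ring
  have h1 : 1 - c₃ / (2 * γ) = (A₀ ^ 2)⁻¹ := by
    rw [hγ', hc]; field_simp; ring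
  have hgc : γ * c₃ = -(1 - A₀ ^ 2) * α / 2 := by
    rw [hγ', hc]; field_simp; linear_combination (A₀^2 - 1) * hsq
  rw [h1, Real.log_inv, Real.log_pow, hgc]
  push_cast; ring
end
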